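/- Let T be a woven based matrix over an abelian group H and let g_1,g_2 ∈ G_i\{s_i} be a G_i-complementary pair in T. Let N = I_{n_k}(g_1;x_k,x_k')∘⋯∘I_{n_1}(g_1;x_1,x_1'), with each n_m ∈ {1,2}, be a finite sequence of intersection moves acting on g_1 that is applicable to T, with result T'. Then the sequence N' = I_{n_k}(g_2;x_k,x_k')∘⋯∘I_{n_1}(g_2;x_1,x_1') (the same moves applied to g_2) is applicable to T', and in the resulting woven based matrix the elements g_1 and g_2 are again G_i-complementary. -/

import Mathlib

universe u v

/-- A woven based matrix over an abelian group `H`: parts `G 1, …, G n` with base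
elements `s i ∈ G i`, a weaving set `I`, and a skew-symmetric pairing `b` which is a
weaving map on `(G ∪ I) × I`. -/
structure WovenBasedMatrix (α : Type u) (H : Type v) [DecidableEq α] [AddCommGroup H]
    (n : ℕ) where
  G : Fin n → Finset α
  I : Finset α
  s : Fin n → α
  b : α → α → H
  s_mem : ∀ i, s i ∈ G i
  disjointG : ∀ i j, i ≠ j → Disjoint (G i) (G j)
  disjointI : ∀ i, Disjoint (G i) I
  skew : ∀ a ∈ Finset.univ.biUnion G ∪ I, ∀ a' ∈ Finset.univ.biUnion G ∪ I,
    b a a' = - b a' a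
  diag : ∀ a ∈ Finset.univ.biUnion G ∪ I, b a a = 0
  inter_zero : ∀ x ∈ I, ∀ y ∈ I, b x y = 0
  weave_two : ∀ x ∈ I, ∃ i j : Fin n, i ≠ j ∧ b (s i) x ≠ 0 ∧ b (s j) x ≠ 0 ∧
    b (s i) x = - b (s j) x ∧ ∀ k : Fin n, b (s k) x ≠ 0 → k = i ∨ k = j
  weave_val : ∀ i : Fin n, ∀ g ∈ G i, ∀ x ∈ I, b g x = 0 ∨ b g x = b (s i) x

variable {α : Type u} {H : Type v} [DecidableEq α] [AddCommGroup H] {n : ℕ}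

/-- The underlying set `G ∪ I` of a woven based matrix. -/
def WovenBasedMatrix.carrier (T : WovenBasedMatrix α H n) : Finset α :=
  Finset.univ.biUnion T.G ∪ T.I

/-- The effect of the intersection move `I_□(g; x₁, x₂)` on the skew-symmetric map `b`,
where `sj` is the base element of the part containing `g`:
`b' g xₖ = b sj xₖ - b g xₖ` for `k = 1,2` (and symmetrically), `b' = b` elsewhere. -/
def IMap (b : α → α → H) (sj g x1 x2 : α) : α → α → H := fun a a' =>
  if a = g ∧ (a' = x1 ∨ a' = x2) then b sj a' - b a a'
  else if a' = g ∧ (a = x1 ∨ a = x2) then b a sj - b a a'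
  else b a a'

/-- `x₁, x₂` are a `g`-annihilating pair (with `sj` the base element of `g`'s part). -/
def IsGAnn (b : α → α → H) (sj g x1 x2 : α) : Prop :=
  b g x1 + b g x2 = 0 ∧ b sj x1 + b sj x2 = 0

/-- `x₁, x₂` are a `g`-unequal pair (with `sj` the base element of `g`'s part). -/
def IsGUnequal (b : α → α → H) (sj g x1 x2 : α) : Prop :=
  b g x1 ≠ b g x2 ∧ b sj x1 = b sj x2

/-- `MoveApplicable k b sj g x1 x2`: the intersection move `I_{k+1}(g;x₁,x₂)` is applicable to
the matrix `b`.  Here `k = 0` encodes the move `I₁` (needing a `g`-annihilating pair) and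
`k = 1` encodes the move `I₂` (needing a `g`-unequal pair). -/
def MoveApplicable (k : Fin 2) (b : α → α → H) (sj g x1 x2 : α) : Prop :=
  if k = 0 then IsGAnn b sj g x1 x2 else IsGUnequal b sj g x1 x2

/-- The data of an intersection move `I_{sq+1}(g; x₁, x₂)` with `g` in the part `G j`. -/
structure MoveDatum (α : Type u) (n : ℕ) where
  j : Fin n
  sq : Fin 2
  g : α
  x1 : α
  x2 : α

/-- The move datum refers to an element `g ∈ G j \ {s j}` and a pair of distinct
elements of the weaving set `I`. -/
def MoveDatum.valid (m : MoveDatum α n) (T : WovenBasedMatrix α H n) : Prop :=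
  m.g ∈ T.G m.j ∧ m.g ≠ T.s m.j ∧ m.x1 ∈ T.I ∧ m.x2 ∈ T.I ∧ m.x1 ≠ m.x2

/-- Apply a finite sequence of intersection moves (listed in order of application)
to the skew-symmetric map `b`. -/
def applyMoves (s : Fin n → α) : List (MoveDatum α n) → (α → α → H) → (α → α → H)
  | [], b => b
  | m :: ms, b => applyMoves s ms (IMap b (s m.j) m.g m.x1 m.x2)

/-- A finite sequence of intersection moves is applicable to `b`: each move in turn is
applicable to the result of the previous ones. -/
def movesApplicable (s : Fin n → α) : List (MoveDatum α n) → (α → α → H) → Prop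
  | [], _ => True
  | m :: ms, b => MoveApplicable m.sq b (s m.j) m.g m.x1 m.x2 ∧
      movesApplicable s ms (IMap b (s m.j) m.g m.x1 m.x2)

/-- A sequence of intersection moves is reduced if it splits into consecutive blocks,
each block acting on a single element `g` of `G`, with pairwise distinct elements `g`
across blocks, and within each block every element of the weaving set appears in at
most one move. -/
def ReducedMoves (L : List (MoveDatum α n)) : Prop :=
  ∃ Bs : List (List (MoveDatum α n)),
    L = Bs.flatten ∧
    (∀ B ∈ Bs, ∀ m ∈ B, ∀ m' ∈ B, m.g = m'.g) ∧
    Bs.Pairwise (fun B B' => ∀ m ∈ B, ∀ m' ∈ B', m.g ≠ m'.g) ∧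
    (∀ B ∈ Bs, ∀ x : α, (B.countP fun m => decide (m.x1 = x ∨ m.x2 = x)) ≤ 1)

/-- `M_{1,j}`: elementary extension adding a `G j`-annihilating element `g`. -/
def ExtRel1 (T T' : WovenBasedMatrix α H n) : Prop :=
  ∃ (j : Fin n) (g : α), g ∉ T.carrier ∧
    T'.s = T.s ∧ T'.I = T.I ∧ T'.G j = insert g (T.G j) ∧
    (∀ i : Fin n, i ≠ j → T'.G i = T.G i) ∧
    (∀ a ∈ T.carrier, ∀ a' ∈ T.carrier, T'.b a a' = T.b a a') ∧
    (∀ a ∈ T'.carrier, T'.b g a = 0)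

/-- `M_{2,j}`: elementary extension adding a `G j`-core element `g`. -/
def ExtRel2 (T T' : WovenBasedMatrix α H n) : Prop :=
  ∃ (j : Fin n) (g : α), g ∉ T.carrier ∧
    T'.s = T.s ∧ T'.I = T.I ∧ T'.G j = insert g (T.G j) ∧
    (∀ i : Fin n, i ≠ j → T'.G i = T.G i) ∧
    (∀ a ∈ T.carrier, ∀ a' ∈ T.carrier, T'.b a a' = T.b a a') ∧
    (∀ a ∈ T'.carrier, T'.b g a = T'.b (T'.s j) a)

/-- `M_{3,j}`: elementary extension adding a `G j`-complementary pair `g₁, g₂`. -/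
def ExtRel3 (T T' : WovenBasedMatrix α H n) : Prop :=
  ∃ (j : Fin n) (g1 g2 : α), g1 ≠ g2 ∧ g1 ∉ T.carrier ∧ g2 ∉ T.carrier ∧
    T'.s = T.s ∧ T'.I = T.I ∧ T'.G j = insert g1 (insert g2 (T.G j)) ∧
    (∀ i : Fin n, i ≠ j → T'.G i = T.G i) ∧
    (∀ a ∈ T.carrier, ∀ a' ∈ T.carrier, T'.b a a' = T.b a a') ∧
    (∀ a ∈ T'.carrier, T'.b g1 a + T'.b g2 a = T'.b (T'.s j) a)

/-- `M₄`: elementary extension adding a sum-annihilating pair `x₁, x₂` to the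
weaving set. -/
def ExtRel4 (T T' : WovenBasedMatrix α H n) : Prop :=
  ∃ (x1 x2 : α), x1 ≠ x2 ∧ x1 ∉ T.carrier ∧ x2 ∉ T.carrier ∧
    T'.s = T.s ∧ T'.G = T.G ∧ T'.I = insert x1 (insert x2 T.I) ∧
    (∀ a ∈ T.carrier, ∀ a' ∈ T.carrier, T'.b a a' = T.b a a') ∧
    (∀ a ∈ T'.carrier, T'.b x1 a + T'.b x2 a = 0)

/-- `T'` is obtained from `T` by a single elementary extension; the inverse elementary
extensions are given by the reversed relation. -/
def ExtRel (T T' : WovenBasedMatrix α H n) : Prop :=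
  ExtRel1 T T' ∨ ExtRel2 T T' ∨ ExtRel3 T T' ∨ ExtRel4 T T'

/-- `T'` is obtained from `T` by the elementary extension `M_k` (`k ∈ {1,2,3,4}`). -/
def ExtRelAt (k : ℕ) (T T' : WovenBasedMatrix α H n) : Prop :=
  match k with
  | 1 => ExtRel1 T T'
  | 2 => ExtRel2 T T'
  | 3 => ExtRel3 T T'
  | 4 => ExtRel4 T T'
  | _ => False

/-- Isomorphism of woven based matrices: a bijection of the underlying sets together with
a permutation of the indices, matching base elements, parts, weaving sets and pairings. -/
def IsoRel (T T' : WovenBasedMatrix α H n) : Prop :=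
  ∃ (Φ : α → α) (σ : Equiv.Perm (Fin n)),
    Set.BijOn Φ ↑T.carrier ↑T'.carrier ∧
    (∀ i, Φ (T.s i) = T'.s (σ i)) ∧
    (∀ i, (T.G i).image Φ = T'.G (σ i)) ∧
    T.I.image Φ = T'.I ∧
    (∀ a ∈ T.carrier, ∀ a' ∈ T.carrier, T'.b (Φ a) (Φ a') = T.b a a')

/-- `T'` is obtained from `T` by a single intersection move. -/
def IMoveRel (T T' : WovenBasedMatrix α H n) : Prop :=
  ∃ m : MoveDatum α n, m.valid T ∧
    MoveApplicable m.sq T.b (T.s m.j) m.g m.x1 m.x2 ∧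
    T'.G = T.G ∧ T'.I = T.I ∧ T'.s = T.s ∧
    (∀ a ∈ T.carrier, ∀ a' ∈ T.carrier,
      T'.b a a' = IMap T.b (T.s m.j) m.g m.x1 m.x2 a a')

/-- `T` and `T'` are equal woven based matrices (same parts, base elements, weaving set
and the same pairing on the underlying set). -/
def WBMEq (T T' : WovenBasedMatrix α H n) : Prop :=
  T'.G = T.G ∧ T'.I = T.I ∧ T'.s = T.s ∧
  ∀ a ∈ T.carrier, ∀ a' ∈ T.carrier, T'.b a a' = T.b a a'

/-- One step of the homology relation: an elementary extension, an inverse elementary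
extension, an intersection move, or an isomorphism. -/
def HomStep (T T' : WovenBasedMatrix α H n) : Prop :=
  ExtRel T T' ∨ ExtRel T' T ∨ IMoveRel T T' ∨ IsoRel T T'

/-- Two woven based matrices are homologous if they are related by a finite sequence of
elementary extensions and their inverses, intersection moves, and isomorphisms. -/
def Homologous : WovenBasedMatrix α H n → WovenBasedMatrix α H n → Prop :=
  Relation.ReflTransGen HomStep

/-- No inverse elementary extension applies to `T`: there is no `G i`-annihilating
element, no `G i`-core element, no `G i`-complementary pair, and no sum-annihilating
pair in the weaving set. -/
def NoInverseExtension (T : WovenBasedMatrix α H n) : Prop :=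
  (∀ i : Fin n, ∀ g ∈ T.G i, g ≠ T.s i → ¬ (∀ a ∈ T.carrier, T.b g a = 0)) ∧
  (∀ i : Fin n, ∀ g ∈ T.G i, g ≠ T.s i →
    ¬ (∀ a ∈ T.carrier, T.b g a = T.b (T.s i) a)) ∧
  (∀ i : Fin n, ∀ g1 ∈ T.G i, ∀ g2 ∈ T.G i, g1 ≠ T.s i → g2 ≠ T.s i → g1 ≠ g2 →
    ¬ (∀ a ∈ T.carrier, T.b g1 a + T.b g2 a = T.b (T.s i) a)) ∧
  (∀ x1 ∈ T.I, ∀ x2 ∈ T.I, x1 ≠ x2 → ¬ (∀ a ∈ T.carrier, T.b x1 a + T.b x2 a = 0))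

/-- A woven based matrix is primitive if after every finite sequence of intersection
moves, no inverse elementary extension can be applied. -/
def Primitive (T : WovenBasedMatrix α H n) : Prop :=
  ∀ T' : WovenBasedMatrix α H n, Relation.ReflTransGen IMoveRel T T' →
    NoInverseExtension T'


section AuxCompl

variable {α : Type u} {H : Type v} [DecidableEq α] [AddCommGroup H] {n : ℕ}

lemma IMap_eq_of {b : α → α → H} {s g x1 x2 a a' : α}
    (h1 : ¬(a = g ∧ (a' = x1 ∨ a' = x2))) (h2 : ¬(a' = g ∧ (a = x1 ∨ a = x2))) :
    IMap b s g x1 x2 a a' = b a a' := by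
  simp only [IMap]; rw [if_neg h1, if_neg h2]

lemma IMap_self {b : α → α → H} {s g x1 x2 a' : α} (hx : a' = x1 ∨ a' = x2) :
    IMap b s g x1 x2 g a' = b s a' - b g a' := by
  simp [IMap, hx]

set_option maxHeartbeats 2000000 in
lemma IMap_swap (b : α → α → H) (s g g' x1 x2 y1 y2 : α)
    (hgg : g ≠ g') (hsg : s ≠ g) (hsg' : s ≠ g')
    (hx1 : x1 ≠ g) (hx2 : x2 ≠ g) (hx1' : x1 ≠ g') (hx2' : x2 ≠ g')
    (hy1 : y1 ≠ g) (hy2 : y2 ≠ g) (hy1' : y1 ≠ g') (hy2' : y2 ≠ g')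
    (hsx1 : s ≠ x1) (hsx2 : s ≠ x2) (hsy1 : s ≠ y1) (hsy2 : s ≠ y2) :
    IMap (IMap b s g x1 x2) s g' y1 y2 = IMap (IMap b s g' y1 y2) s g x1 x2 := by
  have := hgg.symm; have := hsg.symm; have := hsg'.symm
  have := hx1.symm; have := hx2.symm; have := hx1'.symm; have := hx2'.symm
  have := hy1.symm; have := hy2.symm; have := hy1'.symm; have := hy2'.symm
  have := hsx1.symm; have := hsx2.symm; have := hsy1.symm; have := hsy2.symm
  funext a a'
  simp only [IMap]
  split_ifs <;> simp_all

lemma applyMoves_row (s : Fin n → α) (L : List (MoveDatum α n)) (b : α → α → H) (c : α)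
    (h : ∀ m ∈ L, c ≠ m.g ∧ c ≠ m.x1 ∧ c ≠ m.x2) (a' : α) :
    applyMoves s L b c a' = b c a' := by
  induction L generalizing b with
  | nil => rfl
  | cons m L ih =>
    obtain ⟨h1, h2, h3⟩ := h m List.mem_cons_self
    rw [applyMoves, ih _ (fun m' hm' => h m' (List.mem_cons_of_mem _ hm'))]
    exact IMap_eq_of (by tauto) (by tauto)

lemma IMap_agree {b b' : α → α → H} {sj g x1 x2 : α} {c : α}
    (hg : g ≠ c) (hs : sj ≠ c)
    (hab : ∀ a a', a ≠ c → a' ≠ c → b a a' = b' a a')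
    {a a' : α} (ha : a ≠ c) (ha' : a' ≠ c) :
    IMap b sj g x1 x2 a a' = IMap b' sj g x1 x2 a a' := by
  simp only [IMap]
  split_ifs
  · rw [hab _ _ hs ha', hab _ _ ha ha']
  · rw [hab _ _ ha hs, hab _ _ ha ha']
  · exact hab _ _ ha ha'

lemma movesApplicable_agree (s : Fin n → α) (L : List (MoveDatum α n)) (b b' : α → α → H)
    (c : α)
    (hm : ∀ m ∈ L, m.g ≠ c ∧ m.x1 ≠ c ∧ m.x2 ≠ c ∧ s m.j ≠ c)
    (hab : ∀ a a', a ≠ c → a' ≠ c → b a a' = b' a a')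
    (h : movesApplicable s L b) : movesApplicable s L b' := by
  induction L generalizing b b' with
  | nil => trivial
  | cons m L ih =>
    obtain ⟨hg, hx1, hx2, hs⟩ := hm m List.mem_cons_self
    obtain ⟨h1, h2⟩ := h
    refine ⟨?_, ih _ _ (fun m' hm' => hm m' (List.mem_cons_of_mem _ hm'))
      (fun a a' ha ha' => IMap_agree hg hs hab ha ha') h2⟩
    rcases eq_or_ne m.sq 0 with hk | hk
    · simp only [MoveApplicable, hk, if_pos, IsGAnn] at h1 ⊢
      rw [← hab _ _ hg hx1, ← hab _ _ hg hx2, ← hab _ _ hs hx1, ← hab _ _ hs hx2]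
      exact h1
    · simp only [MoveApplicable, hk, if_neg, IsGUnequal] at h1 ⊢
      rw [← hab _ _ hg hx1, ← hab _ _ hg hx2, ← hab _ _ hs hx1, ← hab _ _ hs hx2]
      exact h1

lemma applyMoves_comm (s : Fin n → α) (i : Fin n) (g1 g2 y1 y2 : α)
    (L : List (MoveDatum α n))
    (hmoves : ∀ m ∈ L, m.j = i ∧ m.g = g1 ∧ m.x1 ≠ g1 ∧ m.x2 ≠ g1 ∧
      m.x1 ≠ g2 ∧ m.x2 ≠ g2 ∧ s i ≠ m.x1 ∧ s i ≠ m.x2)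
    (hgg : g1 ≠ g2) (hsg : s i ≠ g1) (hsg' : s i ≠ g2)
    (hy1 : y1 ≠ g1) (hy2 : y2 ≠ g1) (hy1' : y1 ≠ g2) (hy2' : y2 ≠ g2)
    (hsy1 : s i ≠ y1) (hsy2 : s i ≠ y2)
    (b : α → α → H) :
    IMap (applyMoves s L b) (s i) g2 y1 y2 = applyMoves s L (IMap b (s i) g2 y1 y2) := by
  induction L generalizing b with
  | nil => rfl
  | cons m L ih =>
    obtain ⟨hj, hg, h1, h2, h3, h4, h5, h6⟩ := hmoves m List.mem_cons_self
    rw [applyMoves, applyMoves,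
      ih (fun m' hm' => hmoves m' (List.mem_cons_of_mem _ hm')) _, hj, hg,
      IMap_swap b (s i) g1 g2 m.x1 m.x2 y1 y2 hgg hsg hsg' h1 h2 h3 h4
        hy1 hy2 hy1' hy2' h5 h6 hsy1 hsy2]

lemma compl_aux (T : WovenBasedMatrix α H n) (i : Fin n) (g1 g2 : α)
    (hg1I : g1 ∉ T.I) (hg2I : g2 ∉ T.I) (hsI : T.s i ∉ T.I)
    (hg12 : g1 ≠ g2) (hsg1 : T.s i ≠ g1) (hsg2 : T.s i ≠ g2)
    (L : List (MoveDatum α n))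
    (hL : ∀ m ∈ L, m.j = i ∧ m.g = g1 ∧ m.x1 ∈ T.I ∧ m.x2 ∈ T.I)
    (b : α → α → H)
    (hcomp : ∀ a ∈ T.carrier, b g1 a + b g2 a = b (T.s i) a)
    (happ : movesApplicable T.s L b) :
    movesApplicable T.s (L.map fun m => { m with g := g2 }) (applyMoves T.s L b) ∧
    ∀ a ∈ T.carrier,
      applyMoves T.s (L.map fun m => { m with g := g2 }) (applyMoves T.s L b) g1 a +
      applyMoves T.s (L.map fun m => { m with g := g2 }) (applyMoves T.s L b) g2 a =
      applyMoves T.s (L.map fun m => { m with g := g2 }) (applyMoves T.s L b)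
        (T.s i) a := by
  have memI : ∀ x ∈ T.I, x ∈ T.carrier := fun x hx => Finset.mem_union_right _ hx
  induction L generalizing b with
  | nil => exact ⟨trivial, hcomp⟩
  | cons m L ih =>
    obtain ⟨hj, hg, hx1I, hx2I⟩ := hL m List.mem_cons_self
    have hx1g1 : m.x1 ≠ g1 := fun h => hg1I (h ▸ hx1I)
    have hx2g1 : m.x2 ≠ g1 := fun h => hg1I (h ▸ hx2I)
    have hx1g2 : m.x1 ≠ g2 := fun h => hg2I (h ▸ hx1I)
    have hx2g2 : m.x2 ≠ g2 := fun h => hg2I (h ▸ hx2I)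
    have hsx1 : T.s i ≠ m.x1 := fun h => hsI (h ▸ hx1I)
    have hsx2 : T.s i ≠ m.x2 := fun h => hsI (h ▸ hx2I)
    have hx1g1' := hx1g1.symm
    have hx2g1' := hx2g1.symm
    have hx1g2' := hx1g2.symm
    have hx2g2' := hx2g2.symm
    have hsx1' := hsx1.symm
    have hsx2' := hsx2.symm
    have hg12' := hg12.symm
    have hsg1' := hsg1.symm
    have hsg2' := hsg2.symm
    have hLtail : ∀ m' ∈ L, m'.j = i ∧ m'.g = g1 ∧ m'.x1 ∈ T.I ∧ m'.x2 ∈ T.I :=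
      fun m' hm' => hL m' (List.mem_cons_of_mem _ hm')
    obtain ⟨happ1, happ2⟩ := happ
    rw [hj, hg] at happ1 happ2
    have eb''g1 : ∀ a, IMap (IMap b (T.s i) g1 m.x1 m.x2) (T.s i) g2 m.x1 m.x2 g1 a
        = IMap b (T.s i) g1 m.x1 m.x2 g1 a := fun a =>
      IMap_eq_of (by tauto) (by tauto)
    have eb's : ∀ a, IMap b (T.s i) g1 m.x1 m.x2 (T.s i) a = b (T.s i) a :=
      fun a => IMap_eq_of (by tauto) (by tauto)
    have eb''s : ∀ a, IMap (IMap b (T.s i) g1 m.x1 m.x2) (T.s i) g2 m.x1 m.x2 (T.s i) a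
        = b (T.s i) a := fun a => (IMap_eq_of (by tauto) (by tauto)).trans (eb's a)
    have eb'g2 : ∀ a, IMap b (T.s i) g1 m.x1 m.x2 g2 a = b g2 a :=
      fun a => IMap_eq_of (by tauto) (by tauto)
    have hcomp'' : ∀ a ∈ T.carrier,
        IMap (IMap b (T.s i) g1 m.x1 m.x2) (T.s i) g2 m.x1 m.x2 g1 a +
        IMap (IMap b (T.s i) g1 m.x1 m.x2) (T.s i) g2 m.x1 m.x2 g2 a =
        IMap (IMap b (T.s i) g1 m.x1 m.x2) (T.s i) g2 m.x1 m.x2 (T.s i) a := by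
      intro a ha
      rw [eb''g1, eb''s]
      by_cases hxa : a = m.x1 ∨ a = m.x2
      · rw [IMap_self hxa, IMap_self hxa, eb's, eb'g2, sub_add_sub_comm, hcomp a ha]
        abel
      · rw [IMap_eq_of (a := g1) (by tauto) (by tauto),
          IMap_eq_of (a := g2) (by tauto) (by tauto), eb'g2]
        exact hcomp a ha
    have hagree : ∀ a a', a ≠ g2 → a' ≠ g2 →
        IMap b (T.s i) g1 m.x1 m.x2 a a' =
        IMap (IMap b (T.s i) g1 m.x1 m.x2) (T.s i) g2 m.x1 m.x2 a a' :=
      fun a a' ha ha' => (IMap_eq_of (fun hc => ha hc.1) (fun hc => ha' hc.1)).symm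
    have happ2'' : movesApplicable T.s L
        (IMap (IMap b (T.s i) g1 m.x1 m.x2) (T.s i) g2 m.x1 m.x2) := by
      refine movesApplicable_agree T.s L _ _ g2 ?_ hagree happ2
      intro m' hm'
      obtain ⟨hj', hg', hx1', hx2'⟩ := hLtail m' hm'
      exact ⟨hg' ▸ hg12, fun h => hg2I (h ▸ hx1'), fun h => hg2I (h ▸ hx2'),
        hj' ▸ hsg2⟩
    have IH := ih hLtail _ hcomp'' happ2''
    have hrowG2 : ∀ a', applyMoves T.s L (IMap b (T.s i) g1 m.x1 m.x2) g2 a'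
        = b g2 a' := by
      intro a'
      rw [applyMoves_row T.s L _ g2 ?_ a', eb'g2]
      intro m' hm'
      obtain ⟨hj', hg', hx1', hx2'⟩ := hLtail m' hm'
      exact ⟨hg' ▸ hg12.symm, fun h => hg2I (h ▸ hx1'), fun h => hg2I (h ▸ hx2')⟩
    have hrowS : ∀ a', applyMoves T.s L (IMap b (T.s i) g1 m.x1 m.x2) (T.s i) a'
        = b (T.s i) a' := by
      intro a'
      rw [applyMoves_row T.s L _ (T.s i) ?_ a', eb's]
      intro m' hm'
      obtain ⟨hj', hg', hx1', hx2'⟩ := hLtail m' hm'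
      exact ⟨hg' ▸ hsg1, fun h => hsI (h ▸ hx1'), fun h => hsI (h ▸ hx2')⟩
    have c1 := hcomp m.x1 (memI _ hx1I)
    have c2 := hcomp m.x2 (memI _ hx2I)
    have headApp : MoveApplicable m.sq
        (applyMoves T.s L (IMap b (T.s i) g1 m.x1 m.x2)) (T.s i) g2 m.x1 m.x2 := by
      rcases eq_or_ne m.sq 0 with hk | hk
      · simp only [MoveApplicable, hk, if_pos, IsGAnn] at happ1 ⊢
        obtain ⟨ha, hbb⟩ := happ1
        refine ⟨?_, by rw [hrowS, hrowS]; exact hbb⟩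
        rw [hrowG2, hrowG2]
        have e1 : b g2 m.x1 = b (T.s i) m.x1 - b g1 m.x1 := by rw [← c1]; abel
        have e2 : b g2 m.x2 = b (T.s i) m.x2 - b g1 m.x2 := by rw [← c2]; abel
        rw [e1, e2, sub_add_sub_comm, hbb, ha, sub_zero]
      · simp only [MoveApplicable, hk, if_neg, IsGUnequal] at happ1 ⊢
        obtain ⟨hne, heq⟩ := happ1
        refine ⟨?_, by rw [hrowS, hrowS]; exact heq⟩
        rw [hrowG2, hrowG2]
        intro h
        apply hne
        have e1 : b g1 m.x1 = b (T.s i) m.x1 - b g2 m.x1 := by rw [← c1]; abel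
        have e2 : b g1 m.x2 = b (T.s i) m.x2 - b g2 m.x2 := by rw [← c2]; abel
        rw [e1, e2, heq, h]
    have hcommL : IMap (applyMoves T.s L (IMap b (T.s i) g1 m.x1 m.x2))
          (T.s i) g2 m.x1 m.x2 =
        applyMoves T.s L (IMap (IMap b (T.s i) g1 m.x1 m.x2)
          (T.s i) g2 m.x1 m.x2) := by
      refine applyMoves_comm T.s i g1 g2 m.x1 m.x2 L ?_ hg12 hsg1 hsg2
        hx1g1 hx2g1 hx1g2 hx2g2 hsx1 hsx2 _
      intro m' hm'
      obtain ⟨hj', hg', hx1', hx2'⟩ := hLtail m' hm'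
      exact ⟨hj', hg', fun h => hg1I (h ▸ hx1'), fun h => hg1I (h ▸ hx2'),
        fun h => hg2I (h ▸ hx1'), fun h => hg2I (h ▸ hx2'),
        fun h => hsI (h ▸ hx1'), fun h => hsI (h ▸ hx2')⟩
    constructor
    · show movesApplicable T.s ({ m with g := g2 } :: L.map fun m => { m with g := g2 })
        (applyMoves T.s L (IMap b (T.s m.j) m.g m.x1 m.x2))
      rw [hj, hg]
      refine ⟨headApp, ?_⟩
      show movesApplicable T.s (L.map fun m => { m with g := g2 })
        (IMap (applyMoves T.s L (IMap b (T.s i) g1 m.x1 m.x2)) (T.s i) g2 m.x1 m.x2)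
      rw [hcommL]
      exact IH.1
    · intro a ha
      show applyMoves T.s ({ m with g := g2 } :: L.map fun m => { m with g := g2 })
          (applyMoves T.s L (IMap b (T.s m.j) m.g m.x1 m.x2)) g1 a +
        applyMoves T.s ({ m with g := g2 } :: L.map fun m => { m with g := g2 })
          (applyMoves T.s L (IMap b (T.s m.j) m.g m.x1 m.x2)) g2 a =
        applyMoves T.s ({ m with g := g2 } :: L.map fun m => { m with g := g2 })
          (applyMoves T.s L (IMap b (T.s m.j) m.g m.x1 m.x2)) (T.s i) a
      rw [hj, hg]
      show applyMoves T.s (L.map fun m => { m with g := g2 })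
          (IMap (applyMoves T.s L (IMap b (T.s i) g1 m.x1 m.x2)) (T.s i) g2 m.x1 m.x2)
          g1 a +
        applyMoves T.s (L.map fun m => { m with g := g2 })
          (IMap (applyMoves T.s L (IMap b (T.s i) g1 m.x1 m.x2)) (T.s i) g2 m.x1 m.x2)
          g2 a =
        applyMoves T.s (L.map fun m => { m with g := g2 })
          (IMap (applyMoves T.s L (IMap b (T.s i) g1 m.x1 m.x2)) (T.s i) g2 m.x1 m.x2)
          (T.s i) a
      rw [hcommL]
      exact IH.2 a ha

end AuxCompl

/-- if `g₁, g₂` are a `G i`-complementary pair and a sequence of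
intersection moves acting on `g₁` is applied, then the same sequence of moves applied
to `g₂` is applicable to the result, after which `g₁` and `g₂` are again
`G i`-complementary. -/
theorem complementary_pair_matching_moves
    {α : Type u} {H : Type v} [DecidableEq α] [AddCommGroup H] {n : ℕ}
    (T : WovenBasedMatrix α H n) (i : Fin n) (g1 g2 : α)
    (hg1 : g1 ∈ T.G i) (hg1s : g1 ≠ T.s i)
    (hg2 : g2 ∈ T.G i) (hg2s : g2 ≠ T.s i) (hg12 : g1 ≠ g2)
    (hcomp : ∀ a ∈ T.carrier, T.b g1 a + T.b g2 a = T.b (T.s i) a)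
    (L : List (MoveDatum α n))
    (hL : ∀ m ∈ L, m.j = i ∧ m.g = g1 ∧ m.x1 ∈ T.I ∧ m.x2 ∈ T.I ∧ m.x1 ≠ m.x2)
    (happ : movesApplicable T.s L T.b) :
    movesApplicable T.s (L.map fun m => { m with g := g2 }) (applyMoves T.s L T.b) ∧
    (∀ a ∈ T.carrier,
      applyMoves T.s (L.map fun m => { m with g := g2 }) (applyMoves T.s L T.b) g1 a +
        applyMoves T.s (L.map fun m => { m with g := g2 }) (applyMoves T.s L T.b) g2 a =
        applyMoves T.s (L.map fun m => { m with g := g2 }) (applyMoves T.s L T.b)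
          (T.s i) a) := by
  have hg1I : g1 ∉ T.I := fun h => (Finset.disjoint_left.mp (T.disjointI i) hg1) h
  have hg2I : g2 ∉ T.I := fun h => (Finset.disjoint_left.mp (T.disjointI i) hg2) h
  have hsI : T.s i ∉ T.I := fun h => (Finset.disjoint_left.mp (T.disjointI i) (T.s_mem i)) h
  exact compl_aux T i g1 g2 hg1I hg2I hsI hg12 (Ne.symm hg1s) (Ne.symm hg2s) L
    (fun m hm => ⟨(hL m hm).1, (hL m hm).2.1, (hL m hm).2.2.1, (hL m hm).2.2.2.1⟩)
    T.b hcomp happ
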